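/- The following are equivalent: (i) m¹ is an invariant measure for q; (ii) m¹ is an invariant measure for q̂; (iii) m² is an invariant measure for Q. -/

import Mathlib

open MeasureTheory ProbabilityTheory Set Pointwise
open scoped ENNReal

noncomputable section

/-- The increasing affine map from `(-1,1)` onto the chord `E_u`. -/
def ellMap (γ u x : ℝ) : ℝ := -u * Real.cos γ + x * Real.sqrt (1 - u ^ 2 * Real.sin γ ^ 2)

/-- The inverse of `ellMap γ u`. -/
def ellInv (γ u y : ℝ) : ℝ := (y + u * Real.cos γ) / Real.sqrt (1 - u ^ 2 * Real.sin γ ^ 2)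

/-- The open elliptical region `E`. -/
def Eset (γ : ℝ) : Set (ℝ × ℝ) :=
  {p | p.1 ^ 2 + 2 * Real.cos γ * p.1 * p.2 + p.2 ^ 2 < 1}

/-- The state space `E* = E × {−1,1}`, realized inside `ℝ × ℝ × ℝ`. -/
def EstarSet (γ : ℝ) : Set (ℝ × ℝ × ℝ) :=
  {w | (w.1, w.2.1) ∈ Eset γ ∧ (w.2.2 = 1 ∨ w.2.2 = -1)}

/-- Uniform probability measure on `(-1,1)`. -/
def m1 : Measure ℝ := (2 : ℝ≥0∞)⁻¹ • volume.restrict (Ioo (-1 : ℝ) 1)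

/-- The probability measure `m²` on `E*`: normalized Lebesgue measure on `E` times
uniform measure on `{−1,1}`. -/
def m2 (γ : ℝ) : Measure (ℝ × ℝ × ℝ) :=
  ((((volume (Eset γ))⁻¹ • volume.restrict (Eset γ)).prod
      ((2 : ℝ≥0∞)⁻¹ • (Measure.dirac (1 : ℝ) + Measure.dirac (-1 : ℝ)))).map
    fun p => (p.1.1, p.1.2, p.2))

/-- `q` is a Markov kernel on `(-1,1)`. -/
def IsMarkovOnInterval (q : Kernel ℝ ℝ) : Prop :=
  IsMarkovKernel q ∧ ∀ x ∈ Ioo (-1 : ℝ) 1, q x (Ioo (-1 : ℝ) 1) = 1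

/-- The kernel `Q` of the alternating random walk, as a measure-valued function on the
state space. -/
def Qfun (γ : ℝ) (q : Kernel ℝ ℝ) : ℝ × ℝ × ℝ → Measure (ℝ × ℝ × ℝ) := fun w =>
  if w.2.2 = -1 then
    Measure.map (fun x => (ellMap γ w.2.1 x, w.2.1, (1 : ℝ))) (q (-ellInv γ w.2.1 w.1))
  else
    Measure.map (fun x => (w.1, ellMap γ w.1 x, (-1 : ℝ))) (q (-ellInv γ w.1 w.2.1))

/-- The kernel `Q†`. -/
def Qdag (γ : ℝ) (q : Kernel ℝ ℝ) : ℝ × ℝ × ℝ → Measure (ℝ × ℝ × ℝ) := fun w =>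
  if w.2.2 = 1 then
    Measure.map (fun x => (ellMap γ w.2.1 x, w.2.1, (-1 : ℝ)))
      ((q (ellInv γ w.2.1 w.1)).map (fun y => -y))
  else
    Measure.map (fun x => (w.1, ellMap γ w.1 x, (1 : ℝ)))
      ((q (ellInv γ w.1 w.2.1)).map (fun y => -y))

/-- Bounded continuous real-valued functions on a subset `S`. -/
def BddCtsOn {X : Type*} [TopologicalSpace X] (S : Set X) (f : X → ℝ) : Prop :=
  ContinuousOn f S ∧ ∃ C, ∀ x ∈ S, |f x| ≤ C

/-- `m¹` is a reversible measure for `q`. -/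
def Reversible1 (q : Kernel ℝ ℝ) : Prop :=
  ∀ j k : ℝ → ℝ, BddCtsOn (Ioo (-1 : ℝ) 1) j → BddCtsOn (Ioo (-1 : ℝ) 1) k →
    ∫ x, k x * ∫ y, j y ∂(q x) ∂m1 = ∫ x, j x * ∫ y, k y ∂(q x) ∂m1

/-- The `†`-operation on measure-valued functions on `(-1,1)`: `p†(x,A) := p(−x,−A)`. -/
def dag (p : ℝ → Measure ℝ) : ℝ → Measure ℝ := fun x => (p (-x)).map (fun y => -y)

/-- `m¹` is a `†`-reversible measure for `p`. -/
def DagReversible1 (p : ℝ → Measure ℝ) : Prop :=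
  ∀ j k : ℝ → ℝ, BddCtsOn (Ioo (-1 : ℝ) 1) j → BddCtsOn (Ioo (-1 : ℝ) 1) k →
    ∫ x, k x * ∫ y, j y ∂(p x) ∂m1 = ∫ x, j x * ∫ y, k y ∂(dag p x) ∂m1

/-- `m²` is a `†`-reversible measure for `Q`. -/
def DagReversible2 (γ : ℝ) (q : Kernel ℝ ℝ) : Prop :=
  ∀ f g : ℝ × ℝ × ℝ → ℝ, BddCtsOn (EstarSet γ) f → BddCtsOn (EstarSet γ) g →
    ∫ w, g w * ∫ w', f w' ∂(Qfun γ q w) ∂(m2 γ) =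
      ∫ w, f w * ∫ w', g w' ∂(Qdag γ q w) ∂(m2 γ)

/-- `μ` is an invariant measure for the transition function `p`. -/
def KInvariantMeasure {S : Type*} [MeasurableSpace S] (μ : Measure S) (p : S → Measure S) :
    Prop :=
  ∀ A : Set S, MeasurableSet A → ∫⁻ x, p x A ∂μ = μ A

/-- The set `A` is `(μ,p)`-invariant. -/
def KInvariantSet {S : Type*} [MeasurableSpace S] (μ : Measure S) (p : S → Measure S)
    (A : Set S) : Prop :=
  ∀ᵐ x ∂μ, x ∈ A → p x A = 1

/-- `μ` is an ergodic measure for the transition function `p`. -/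
def KErgodicMeasure {S : Type*} [MeasurableSpace S] (μ : Measure S) (p : S → Measure S) :
    Prop :=
  KInvariantMeasure μ p ∧
    ∀ A : Set S, MeasurableSet A → KInvariantSet μ p A → μ A = 0 ∨ μ A = 1

/-- The set `A` is `(μ,p)`-ergodic. -/
def KErgodicSet {S : Type*} [MeasurableSpace S] (μ : Measure S) (p : S → Measure S)
    (A : Set S) : Prop :=
  MeasurableSet A ∧ KInvariantSet μ p A ∧
    ∀ B : Set S, B ⊆ A → MeasurableSet B → KInvariantSet μ p B → μ B = 0 ∨ μ B = μ A

/-- `F⁺`: the slice of `F ⊆ E*` at `s = 1`. -/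
def Fplus (F : Set (ℝ × ℝ × ℝ)) : Set (ℝ × ℝ) := {p | (p.1, p.2, (1 : ℝ)) ∈ F}

/-- `F⁻`: the slice of `F ⊆ E*` at `s = −1`. -/
def Fminus (F : Set (ℝ × ℝ × ℝ)) : Set (ℝ × ℝ) := {p | (p.1, p.2, (-1 : ℝ)) ∈ F}

/-- `[G]^u ⊆ (−1,1)`. -/
def brU (γ : ℝ) (G : Set (ℝ × ℝ)) (u : ℝ) : Set ℝ :=
  {x | x ∈ Ioo (-1 : ℝ) 1 ∧ (u, ellMap γ u x) ∈ G}

/-- `[G]_v ⊆ (−1,1)`. -/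
def brV (γ : ℝ) (G : Set (ℝ × ℝ)) (v : ℝ) : Set ℝ :=
  {x | x ∈ Ioo (-1 : ℝ) 1 ∧ (ellMap γ v x, v) ∈ G}

/-- The map `T₀` on `E*`. -/
def T0 (γ : ℝ) (w : ℝ × ℝ × ℝ) : ℝ × ℝ × ℝ :=
  (-w.1 - 2 * w.2.1 * Real.cos γ, w.2.1, -w.2.2)

/-- The map `T₁` on `E*`. -/
def T1 (γ : ℝ) (w : ℝ × ℝ × ℝ) : ℝ × ℝ × ℝ :=
  (w.1, -w.2.1 - 2 * w.1 * Real.cos γ, -w.2.2)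

/-- The linear map `U_γ` taking `E` to the unit disk. -/
def Ugamma (γ : ℝ) (p : ℝ × ℝ) : ℝ × ℝ := (p.1 + p.2 * Real.cos γ, p.2 * Real.sin γ)

/-- `V(u,v,s) = s·|U_γ(u,v)|²`. -/
def Vfun (γ : ℝ) (w : ℝ × ℝ × ℝ) : ℝ :=
  w.2.2 * ((w.1 + w.2.1 * Real.cos γ) ^ 2 + (w.2.1 * Real.sin γ) ^ 2)

section Helpers

variable {γ : ℝ}

lemma measurable_ellMap_pair : Measurable fun p : ℝ × ℝ => ellMap γ p.1 p.2 := by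
  unfold ellMap; fun_prop

lemma measurable_ellInv_pair : Measurable fun p : ℝ × ℝ => ellInv γ p.1 p.2 := by
  unfold ellInv; fun_prop

lemma mem_Eset_iff {u v : ℝ} :
    (u, v) ∈ Eset γ ↔ (v + u * Real.cos γ) ^ 2 + u ^ 2 * Real.sin γ ^ 2 < 1 := by
  simp only [Eset, Set.mem_setOf_eq]
  constructor <;> intro h <;> nlinarith [Real.sin_sq_add_cos_sq γ]

lemma mem_Eset_swap {u v : ℝ} : (u, v) ∈ Eset γ ↔ (v, u) ∈ Eset γ := by
  simp only [Eset, Set.mem_setOf_eq]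
  constructor <;> intro h <;> nlinarith

lemma measurableSet_Eset : MeasurableSet (Eset γ) := by
  have : IsOpen (Eset γ) := by
    have : Continuous fun p : ℝ × ℝ => p.1 ^ 2 + 2 * Real.cos γ * p.1 * p.2 + p.2 ^ 2 := by
      fun_prop
    exact isOpen_lt this continuous_const
  exact this.measurableSet

lemma sqrt_pos_of {u : ℝ} (h : u ^ 2 * Real.sin γ ^ 2 < 1) :
    0 < Real.sqrt (1 - u ^ 2 * Real.sin γ ^ 2) :=
  Real.sqrt_pos.mpr (by linarith)

lemma sqrt_zero_of {u : ℝ} (h : ¬ u ^ 2 * Real.sin γ ^ 2 < 1) :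
    Real.sqrt (1 - u ^ 2 * Real.sin γ ^ 2) = 0 :=
  Real.sqrt_eq_zero'.mpr (by have h1 : (1:ℝ) ≤ u ^ 2 * Real.sin γ ^ 2 := not_lt.mp h; linarith)

lemma mem_E_ellMap {u : ℝ} (h : u ^ 2 * Real.sin γ ^ 2 < 1) (x : ℝ) :
    (u, ellMap γ u x) ∈ Eset γ ↔ x ∈ Ioo (-1 : ℝ) 1 := by
  have hsq : Real.sqrt (1 - u ^ 2 * Real.sin γ ^ 2) ^ 2 = 1 - u ^ 2 * Real.sin γ ^ 2 :=
    Real.sq_sqrt (by linarith)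
  have hpos := sqrt_pos_of (γ := γ) h
  set r := Real.sqrt (1 - u ^ 2 * Real.sin γ ^ 2) with hr
  rw [mem_Eset_iff, ellMap, ← hr]
  constructor
  · intro hx
    have hx2 : x ^ 2 * r ^ 2 < r ^ 2 := by nlinarith [hx, hsq]
    have hx3 : x ^ 2 < 1 := by
      have h4 := mul_pos hpos hpos
      nlinarith
    constructor <;> nlinarith [hx3]
  · intro hx
    obtain ⟨hx1, hx2⟩ := hx
    have hx3 : x ^ 2 < 1 := by nlinarith
    have hx4 : x ^ 2 * r ^ 2 < 1 * r ^ 2 := by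
      exact mul_lt_mul_of_pos_right hx3 (by positivity)
    nlinarith [hx4, hsq]

lemma ellInv_ellMap {u : ℝ} (h : u ^ 2 * Real.sin γ ^ 2 < 1) (x : ℝ) :
    ellInv γ u (ellMap γ u x) = x := by
  have hpos := sqrt_pos_of (γ := γ) h
  rw [ellInv, ellMap, show -u * Real.cos γ + x * Real.sqrt (1 - u ^ 2 * Real.sin γ ^ 2) +
      u * Real.cos γ = x * Real.sqrt (1 - u ^ 2 * Real.sin γ ^ 2) by ring,
    mul_div_cancel_right₀ x hpos.ne']

lemma cov (f : ℝ → ℝ≥0∞) (hf : Measurable f) (a b : ℝ) (hb : 0 < b) :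
    ∫⁻ v, f v = ENNReal.ofReal b * ∫⁻ x, f (a + x * b) := by
  have hg : (fun x : ℝ => a + x * b) = (fun y => a + y) ∘ (fun x => b * x) := by
    funext x; simp [mul_comm]
  have hmap : Measure.map (fun x : ℝ => a + x * b) volume
      = ENNReal.ofReal |b⁻¹| • volume := by
    rw [hg, ← Measure.map_map (by fun_prop) (by fun_prop), Real.map_volume_mul_left hb.ne',
      Measure.map_smul, (measurePreserving_add_left volume a).map_eq]
  have h1 : ∫⁻ x, f (a + x * b) = ENNReal.ofReal |b⁻¹| * ∫⁻ v, f v := by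
    rw [← lintegral_map hf (by fun_prop), hmap, lintegral_smul_measure, smul_eq_mul]
  rw [h1, ← mul_assoc, abs_of_pos (inv_pos.mpr hb), ← ENNReal.ofReal_mul hb.le,
    mul_inv_cancel₀ hb.ne', ENNReal.ofReal_one, one_mul]

end Helpers
lemma fub1 (γ : ℝ) (f : ℝ × ℝ → ℝ≥0∞) (hf : Measurable f) :
    ∫⁻ p in Eset γ, f p = ∫⁻ u, ENNReal.ofReal (Real.sqrt (1 - u ^ 2 * Real.sin γ ^ 2)) *
      ∫⁻ x in Ioo (-1 : ℝ) 1, f (u, ellMap γ u x) := by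
  have hind : Measurable ((Eset γ).indicator f) := hf.indicator measurableSet_Eset
  rw [← lintegral_indicator measurableSet_Eset, Measure.volume_eq_prod,
    lintegral_prod _ hind.aemeasurable]
  refine lintegral_congr fun u => ?_
  by_cases h : u ^ 2 * Real.sin γ ^ 2 < 1
  · have hpos := sqrt_pos_of (γ := γ) h
    rw [cov (fun v => (Eset γ).indicator f (u, v))
      (hind.comp measurable_prodMk_left) (-u * Real.cos γ)
      (Real.sqrt (1 - u ^ 2 * Real.sin γ ^ 2)) hpos]
    congr 1
    rw [← lintegral_indicator measurableSet_Ioo]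
    refine lintegral_congr fun x => ?_
    have he : -u * Real.cos γ + x * Real.sqrt (1 - u ^ 2 * Real.sin γ ^ 2) = ellMap γ u x := rfl
    rw [he]
    by_cases hx : x ∈ Ioo (-1 : ℝ) 1
    · rw [Set.indicator_of_mem ((mem_E_ellMap h x).mpr hx),
        Set.indicator_of_mem hx]
    · rw [Set.indicator_of_notMem (fun hc => hx ((mem_E_ellMap h x).mp hc)),
        Set.indicator_of_notMem hx]
  · have h0 : Real.sqrt (1 - u ^ 2 * Real.sin γ ^ 2) = 0 := sqrt_zero_of h
    rw [h0, ENNReal.ofReal_zero, zero_mul]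
    have : ∀ v, (u, v) ∉ Eset γ := by
      intro v hc
      rw [mem_Eset_iff] at hc
      nlinarith [sq_nonneg (v + u * Real.cos γ), not_lt.mp h]
    simp only [Set.indicator_of_notMem (this _), lintegral_zero]

lemma fub2 (γ : ℝ) (f : ℝ × ℝ → ℝ≥0∞) (hf : Measurable f) :
    ∫⁻ p in Eset γ, f p = ∫⁻ v, ENNReal.ofReal (Real.sqrt (1 - v ^ 2 * Real.sin γ ^ 2)) *
      ∫⁻ x in Ioo (-1 : ℝ) 1, f (ellMap γ v x, v) := by
  have hswapE : (Prod.swap : ℝ × ℝ → ℝ × ℝ) ⁻¹' (Eset γ) = Eset γ := by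
    ext p
    exact (mem_Eset_swap (u := p.1) (v := p.2)).symm
  have hsp : MeasurePreserving (Prod.swap : ℝ × ℝ → ℝ × ℝ)
      (volume.restrict (Eset γ)) (volume.restrict (Eset γ)) := by
    have h1 : MeasurePreserving (Prod.swap : ℝ × ℝ → ℝ × ℝ) volume volume := by
      rw [Measure.volume_eq_prod]
      exact Measure.measurePreserving_swap
    have := h1.restrict_preimage (measurableSet_Eset (γ := γ))
    rwa [hswapE] at this
  have hstep : ∫⁻ p in Eset γ, f p = ∫⁻ p in Eset γ, f (Prod.swap p) := (hsp.lintegral_comp hf).symm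
  rw [hstep]
  exact fub1 γ (fun p => f p.swap) (hf.comp measurable_swap)
lemma lint_m2 (γ : ℝ) (F : ℝ × ℝ × ℝ → ℝ≥0∞) (hF : Measurable F) :
    ∫⁻ w, F w ∂(m2 γ) = (volume (Eset γ))⁻¹ * (2⁻¹ *
      ((∫⁻ p in Eset γ, F (p.1, p.2, 1)) + ∫⁻ p in Eset γ, F (p.1, p.2, -1))) := by
  have hφ : Measurable (fun p : (ℝ × ℝ) × ℝ => (p.1.1, p.1.2, p.2)) := by fun_prop
  have h1 : Measurable fun uv : ℝ × ℝ => F (uv.1, uv.2, 1) := hF.comp (by fun_prop)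
  have h2 : Measurable fun uv : ℝ × ℝ => F (uv.1, uv.2, -1) := hF.comp (by fun_prop)
  rw [m2, lintegral_map hF hφ]
  rw [show (∫⁻ a : (ℝ × ℝ) × ℝ, F (a.1.1, a.1.2, a.2)
        ∂(((volume (Eset γ))⁻¹ • volume.restrict (Eset γ)).prod
          ((2 : ℝ≥0∞)⁻¹ • (Measure.dirac (1 : ℝ) + Measure.dirac (-1 : ℝ)))))
      = ∫⁻ uv : ℝ × ℝ, ∫⁻ s, F (uv.1, uv.2, s)
          ∂((2 : ℝ≥0∞)⁻¹ • (Measure.dirac (1 : ℝ) + Measure.dirac (-1 : ℝ)))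
        ∂((volume (Eset γ))⁻¹ • volume.restrict (Eset γ))
    from lintegral_prod _ ((hF.comp hφ).aemeasurable)]
  have hinner : ∀ uv : ℝ × ℝ,
      (∫⁻ s, F (uv.1, uv.2, s) ∂((2 : ℝ≥0∞)⁻¹ • (Measure.dirac (1 : ℝ) + Measure.dirac (-1 : ℝ))))
      = 2⁻¹ * (F (uv.1, uv.2, 1) + F (uv.1, uv.2, -1)) := by
    intro uv
    rw [lintegral_smul_measure, lintegral_add_measure, lintegral_dirac, lintegral_dirac, smul_eq_mul]
  simp only [hinner]
  rw [lintegral_const_mul _ (show Measurable fun uv : ℝ × ℝ => F (uv.1, uv.2, 1) + F (uv.1, uv.2, -1)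
    from h1.add h2), lintegral_smul_measure, smul_eq_mul, lintegral_add_left h1]
  ring
lemma meas_kernel_section {α : Type*} [MeasurableSpace α] (q : Kernel ℝ ℝ) [IsSFiniteKernel q]
    (g : α → ℝ) (hg : Measurable g) {t : Set (α × ℝ)} (ht : MeasurableSet t) :
    Measurable fun a => q (g a) {x | (a, x) ∈ t} := by
  have h := ProbabilityTheory.Kernel.measurable_kernel_prodMk_left
    (κ := q.comap g hg) ht
  simpa [Kernel.comap_apply, Set.preimage] using h

lemma measurable_ellMapInv3 (γ : ℝ) :
    Measurable fun p : (ℝ × ℝ) × ℝ => ellMap γ p.1.1 p.2 := by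
  unfold ellMap; fun_prop

lemma keyU (γ : ℝ) (q : Kernel ℝ ℝ) [IsMarkovKernel q]
    (hinv : ∀ S : Set ℝ, MeasurableSet S →
      ∫⁻ x in Ioo (-1 : ℝ) 1, q (-x) S = volume (S ∩ Ioo (-1 : ℝ) 1))
    (B : Set (ℝ × ℝ)) (hB : MeasurableSet B) :
    ∫⁻ p in Eset γ, q (-ellInv γ p.1 p.2) {x | (p.1, ellMap γ p.1 x) ∈ B}
      = volume (B ∩ Eset γ) := by
  have htB : MeasurableSet {px : (ℝ × ℝ) × ℝ | (px.1.1, ellMap γ px.1.1 px.2) ∈ B} := by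
    exact (measurable_fst.fst.prodMk (measurable_ellMapInv3 γ)) hB
  have hmeas : Measurable fun p : ℝ × ℝ =>
      q (-ellInv γ p.1 p.2) {x | (p.1, ellMap γ p.1 x) ∈ B} :=
    meas_kernel_section q (fun p : ℝ × ℝ => -ellInv γ p.1 p.2)
      (by unfold ellInv; fun_prop) htB
  rw [fub1 γ _ hmeas]
  have hvol : volume (B ∩ Eset γ) = ∫⁻ p in Eset γ, B.indicator 1 p := by
    rw [lintegral_indicator_one hB, Measure.restrict_apply hB]
  rw [hvol, fub1 γ (B.indicator 1) ((measurable_one).indicator hB)]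
  refine lintegral_congr fun u => ?_
  by_cases h : u ^ 2 * Real.sin γ ^ 2 < 1
  · congr 1
    have hSmeas : MeasurableSet {x : ℝ | (u, ellMap γ u x) ∈ B} :=
      (measurable_const.prodMk (by unfold ellMap; fun_prop)) hB
    have hstep : ∀ x : ℝ, q (-ellInv γ u (ellMap γ u x)) {x' | (u, ellMap γ u x') ∈ B}
        = q (-x) {x' | (u, ellMap γ u x') ∈ B} := by
      intro x; rw [ellInv_ellMap h x]
    calc ∫⁻ x in Ioo (-1 : ℝ) 1, q (-ellInv γ u (ellMap γ u x)) {x' | (u, ellMap γ u x') ∈ B}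
        = ∫⁻ x in Ioo (-1 : ℝ) 1, q (-x) {x' | (u, ellMap γ u x') ∈ B} :=
          lintegral_congr fun x => hstep x
      _ = volume ({x' | (u, ellMap γ u x') ∈ B} ∩ Ioo (-1 : ℝ) 1) := hinv _ hSmeas
      _ = ∫⁻ x in Ioo (-1 : ℝ) 1, B.indicator 1 (u, ellMap γ u x) := by
          rw [← Measure.restrict_apply hSmeas, ← lintegral_indicator_one hSmeas]
          refine lintegral_congr fun x => ?_
          by_cases hx : (u, ellMap γ u x) ∈ B
          · rw [Set.indicator_of_mem hx, Set.indicator_of_mem (by exact hx)]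
            rfl
          · rw [Set.indicator_of_notMem hx, Set.indicator_of_notMem (by exact hx)]
  · rw [sqrt_zero_of h, ENNReal.ofReal_zero, zero_mul, zero_mul]

lemma keyV (γ : ℝ) (q : Kernel ℝ ℝ) [IsMarkovKernel q]
    (hinv : ∀ S : Set ℝ, MeasurableSet S →
      ∫⁻ x in Ioo (-1 : ℝ) 1, q (-x) S = volume (S ∩ Ioo (-1 : ℝ) 1))
    (B : Set (ℝ × ℝ)) (hB : MeasurableSet B) :
    ∫⁻ p in Eset γ, q (-ellInv γ p.2 p.1) {x | (ellMap γ p.2 x, p.2) ∈ B}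
      = volume (B ∩ Eset γ) := by
  have htB : MeasurableSet {px : (ℝ × ℝ) × ℝ | (ellMap γ px.1.2 px.2, px.1.2) ∈ B} := by
    refine (Measurable.prodMk ?_ measurable_fst.snd) hB
    unfold ellMap; fun_prop
  have hmeas : Measurable fun p : ℝ × ℝ =>
      q (-ellInv γ p.2 p.1) {x | (ellMap γ p.2 x, p.2) ∈ B} :=
    meas_kernel_section q (fun p : ℝ × ℝ => -ellInv γ p.2 p.1)
      (by unfold ellInv; fun_prop) htB
  rw [fub2 γ _ hmeas]
  have hvol : volume (B ∩ Eset γ) = ∫⁻ p in Eset γ, B.indicator 1 p := by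
    rw [lintegral_indicator_one hB, Measure.restrict_apply hB]
  rw [hvol, fub2 γ (B.indicator 1) ((measurable_one).indicator hB)]
  refine lintegral_congr fun v => ?_
  by_cases h : v ^ 2 * Real.sin γ ^ 2 < 1
  · congr 1
    have hSmeas : MeasurableSet {x : ℝ | (ellMap γ v x, v) ∈ B} :=
      (Measurable.prodMk (by unfold ellMap; fun_prop) measurable_const) hB
    calc ∫⁻ x in Ioo (-1 : ℝ) 1, q (-ellInv γ v (ellMap γ v x)) {x' | (ellMap γ v x', v) ∈ B}
        = ∫⁻ x in Ioo (-1 : ℝ) 1, q (-x) {x' | (ellMap γ v x', v) ∈ B} :=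
          lintegral_congr fun x => by rw [ellInv_ellMap h x]
      _ = volume ({x' | (ellMap γ v x', v) ∈ B} ∩ Ioo (-1 : ℝ) 1) := hinv _ hSmeas
      _ = ∫⁻ x in Ioo (-1 : ℝ) 1, B.indicator 1 (ellMap γ v x, v) := by
          rw [← Measure.restrict_apply hSmeas, ← lintegral_indicator_one hSmeas]
          refine lintegral_congr fun x => ?_
          by_cases hx : (ellMap γ v x, v) ∈ B
          · rw [Set.indicator_of_mem hx, Set.indicator_of_mem (by exact hx)]
            rfl
          · rw [Set.indicator_of_notMem hx, Set.indicator_of_notMem (by exact hx)]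
  · rw [sqrt_zero_of h, ENNReal.ofReal_zero, zero_mul, zero_mul]
lemma measurable_ofReal_sqrt (γ : ℝ) :
    Measurable fun u : ℝ => ENNReal.ofReal (Real.sqrt (1 - u ^ 2 * Real.sin γ ^ 2)) := by
  fun_prop

lemma R_ne_top {γ : ℝ} (hs : 0 < Real.sin γ) :
    (∫⁻ v : ℝ, ENNReal.ofReal (Real.sqrt (1 - v ^ 2 * Real.sin γ ^ 2))) ≠ ⊤ := by
  set s := Real.sin γ with hsdef
  have hb : ∀ v : ℝ, ENNReal.ofReal (Real.sqrt (1 - v ^ 2 * s ^ 2))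
      ≤ (Icc (-(1/s)) (1/s)).indicator (fun _ => (1 : ℝ≥0∞)) v := by
    intro v
    by_cases hv : v ∈ Icc (-(1/s)) (1/s)
    · rw [Set.indicator_of_mem hv]
      exact ENNReal.ofReal_le_one.mpr (Real.sqrt_le_one.mpr (by nlinarith [sq_nonneg v, sq_nonneg s]))
    · rw [Set.indicator_of_notMem hv]
      have hss : s * (1/s) = 1 := mul_one_div_cancel hs.ne'
      have h2 : ¬ v ^ 2 * s ^ 2 < 1 := fun h2 => hv (mem_Icc.mpr
        ⟨by nlinarith [sq_nonneg (v * s + 1), sq_nonneg (v * s - 1)],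
         by nlinarith [sq_nonneg (v * s + 1), sq_nonneg (v * s - 1)]⟩)
      have h3 : Real.sqrt (1 - v ^ 2 * s ^ 2) = 0 := sqrt_zero_of h2
      simp [h3]
  refine ne_top_of_le_ne_top ?_ (lintegral_mono hb)
  rw [show (fun v : ℝ => (Icc (-(1/s)) (1/s)).indicator (fun _ => (1 : ℝ≥0∞)) v)
    = (Icc (-(1/s)) (1/s)).indicator 1 from rfl, lintegral_indicator_one measurableSet_Icc,
    Real.volume_Icc]
  exact ENNReal.ofReal_ne_top

lemma R_ne_zero {γ : ℝ} (hs : 0 < Real.sin γ) :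
    (∫⁻ v : ℝ, ENNReal.ofReal (Real.sqrt (1 - v ^ 2 * Real.sin γ ^ 2))) ≠ 0 := by
  set s := Real.sin γ with hsdef
  have hlow : ENNReal.ofReal (1/2) * volume (Ioo (0:ℝ) (1/(2*s)))
      ≤ ∫⁻ v : ℝ, ENNReal.ofReal (Real.sqrt (1 - v ^ 2 * s ^ 2)) := by
    calc ENNReal.ofReal (1/2) * volume (Ioo (0:ℝ) (1/(2*s)))
        = ∫⁻ _ in Ioo (0:ℝ) (1/(2*s)), ENNReal.ofReal (1/2) := (setLIntegral_const _ _).symm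
      _ ≤ ∫⁻ v in Ioo (0:ℝ) (1/(2*s)), ENNReal.ofReal (Real.sqrt (1 - v ^ 2 * s ^ 2)) := by
          refine setLIntegral_mono (measurable_ofReal_sqrt γ) fun v hv => ?_
          refine ENNReal.ofReal_le_ofReal ?_
          obtain ⟨hv1, hv2⟩ := hv
          have hss : (1/(2*s)) * s = 1/2 := by field_simp
          have hvs : v * s < 1/2 := by nlinarith
          have hvs0 : 0 ≤ v * s := by positivity
          have h34 : (0:ℝ) ≤ 1 - v ^ 2 * s ^ 2 := by nlinarith
          have hsq := Real.sq_sqrt h34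
          have hnn := Real.sqrt_nonneg (1 - v ^ 2 * s ^ 2)
          nlinarith [hsq, hnn]
      _ ≤ ∫⁻ v : ℝ, ENNReal.ofReal (Real.sqrt (1 - v ^ 2 * s ^ 2)) :=
          setLIntegral_le_lintegral _ _
  intro h0
  rw [h0] at hlow
  have h1 : (0:ℝ) < 1/(2*s) := by positivity
  have h2 : ENNReal.ofReal (1/2) * volume (Ioo (0:ℝ) (1/(2*s))) ≠ 0 := by
    rw [Real.volume_Ioo]
    exact (ENNReal.mul_pos (by simp) (by simp [ENNReal.ofReal_eq_zero]; linarith)).ne'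
  exact h2 (le_antisymm hlow zero_le)

lemma volE_eq (γ : ℝ) : volume (Eset γ)
    = (∫⁻ u : ℝ, ENNReal.ofReal (Real.sqrt (1 - u ^ 2 * Real.sin γ ^ 2))) * ENNReal.ofReal 2 := by
  have h1 : volume (Eset γ) = ∫⁻ _ in Eset γ, (1 : ℝ≥0∞) := (setLIntegral_one _).symm
  rw [h1, fub1 γ (fun _ => 1) measurable_const]
  have h2 : ∀ u : ℝ, (∫⁻ _ in Ioo (-1:ℝ) 1, (1:ℝ≥0∞)) = ENNReal.ofReal 2 := by
    intro u
    rw [setLIntegral_one, Real.volume_Ioo]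
    norm_num
  simp_rw [h2 0]
  exact lintegral_mul_const _ (measurable_ofReal_sqrt γ)

lemma volE_ne_zero {γ : ℝ} (hs : 0 < Real.sin γ) : volume (Eset γ) ≠ 0 := by
  rw [volE_eq γ]
  exact (ENNReal.mul_pos (R_ne_zero hs) (by simp)).ne'

lemma volE_ne_top {γ : ℝ} (hs : 0 < Real.sin γ) : volume (Eset γ) ≠ ⊤ := by
  rw [volE_eq γ]
  exact ENNReal.mul_ne_top (R_ne_top hs) ENNReal.ofReal_ne_top
lemma Qfun_apply (γ : ℝ) (q : Kernel ℝ ℝ) {A : Set (ℝ × ℝ × ℝ)} (hA : MeasurableSet A)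
    (w : ℝ × ℝ × ℝ) :
    Qfun γ q w A = if w.2.2 = -1
      then q (-ellInv γ w.2.1 w.1) {x | (ellMap γ w.2.1 x, w.2.1, (1 : ℝ)) ∈ A}
      else q (-ellInv γ w.1 w.2.1) {x | (w.1, ellMap γ w.1 x, (-1 : ℝ)) ∈ A} := by
  simp only [Qfun]
  split
  · rw [Measure.map_apply (by unfold ellMap; fun_prop) hA]; rfl
  · rw [Measure.map_apply (by unfold ellMap; fun_prop) hA]; rfl

lemma Qfun_meas (γ : ℝ) (q : Kernel ℝ ℝ) [IsMarkovKernel q] {A : Set (ℝ × ℝ × ℝ)}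
    (hA : MeasurableSet A) :
    Measurable fun w : ℝ × ℝ × ℝ => Qfun γ q w A := by
  have h1 : Measurable fun w : ℝ × ℝ × ℝ =>
      q (-ellInv γ w.2.1 w.1) {x | (ellMap γ w.2.1 x, w.2.1, (1 : ℝ)) ∈ A} :=
    meas_kernel_section q (fun w : ℝ × ℝ × ℝ => -ellInv γ w.2.1 w.1)
      (by unfold ellInv; fun_prop)
      (t := {wx : (ℝ × ℝ × ℝ) × ℝ | (ellMap γ wx.1.2.1 wx.2, wx.1.2.1, (1 : ℝ)) ∈ A})
      ((by unfold ellMap; fun_prop :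
        Measurable fun wx : (ℝ × ℝ × ℝ) × ℝ => (ellMap γ wx.1.2.1 wx.2, wx.1.2.1, (1 : ℝ))) hA)
  have h2 : Measurable fun w : ℝ × ℝ × ℝ =>
      q (-ellInv γ w.1 w.2.1) {x | (w.1, ellMap γ w.1 x, (-1 : ℝ)) ∈ A} :=
    meas_kernel_section q (fun w : ℝ × ℝ × ℝ => -ellInv γ w.1 w.2.1)
      (by unfold ellInv; fun_prop)
      (t := {wx : (ℝ × ℝ × ℝ) × ℝ | (wx.1.1, ellMap γ wx.1.1 wx.2, (-1 : ℝ)) ∈ A})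
      ((by unfold ellMap; fun_prop :
        Measurable fun wx : (ℝ × ℝ × ℝ) × ℝ => (wx.1.1, ellMap γ wx.1.1 wx.2, (-1 : ℝ))) hA)
  have heq : (fun w : ℝ × ℝ × ℝ => Qfun γ q w A) = fun w => if w.2.2 = -1
      then q (-ellInv γ w.2.1 w.1) {x | (ellMap γ w.2.1 x, w.2.1, (1 : ℝ)) ∈ A}
      else q (-ellInv γ w.1 w.2.1) {x | (w.1, ellMap γ w.1 x, (-1 : ℝ)) ∈ A} :=
    funext (Qfun_apply γ q hA)
  rw [heq]
  exact Measurable.ite ((measurable_snd.comp measurable_snd) (measurableSet_singleton (-1 : ℝ)))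
    h1 h2
/-- `m¹` is invariant for `q` iff `m¹` is invariant for `q̂` iff
`m²` is invariant for `Q`. -/
theorem invariance_equivalence (γ : ℝ) (hγ : γ ∈ Ioo 0 Real.pi)
    (q : Kernel ℝ ℝ) (hq : IsMarkovOnInterval q) :
    (KInvariantMeasure m1 (fun x => q x) ↔ KInvariantMeasure m1 (fun x => q (-x))) ∧
    (KInvariantMeasure m1 (fun x => q x) ↔ KInvariantMeasure (m2 γ) (Qfun γ q)) := by
  obtain ⟨hγ0, hγpi⟩ := hγ
  have hs : 0 < Real.sin γ := Real.sin_pos_of_pos_of_lt_pi hγ0 hγpi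
  obtain ⟨hqM, hqI⟩ := hq
  haveI := hqM
  -- Part 1: invariance for q iff invariance for q̂ (by symmetry of m1).
  have hneg : ∀ A : Set ℝ, MeasurableSet A →
      ∫⁻ x, q (-x) A ∂m1 = ∫⁻ x, q x A ∂m1 := by
    intro A hA
    have h1 : MeasurePreserving (fun x : ℝ => -x) volume volume :=
      Measure.measurePreserving_neg volume
    have h2 := h1.restrict_preimage (measurableSet_Ioo (a := (-1 : ℝ)) (b := 1))
    have h3 : (fun x : ℝ => -x) ⁻¹' (Ioo (-1 : ℝ) 1) = Ioo (-1 : ℝ) 1 := by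
      ext x
      simp only [mem_preimage, mem_Ioo]
      constructor <;> intro h <;> exact ⟨by linarith [h.2], by linarith [h.1]⟩
    rw [h3] at h2
    rw [m1, lintegral_smul_measure, lintegral_smul_measure,
      h2.lintegral_comp (Kernel.measurable_coe q hA)]
  have part1 : KInvariantMeasure m1 (fun x => q x) ↔ KInvariantMeasure m1 (fun x => q (-x)) := by
    constructor <;> intro h A hA
    · rw [hneg A hA]; exact h A hA
    · rw [← hneg A hA]; exact h A hA
  have m1_apply : ∀ S : Set ℝ, MeasurableSet S →
      m1 S = 2⁻¹ * volume (S ∩ Ioo (-1 : ℝ) 1) := by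
    intro S hS
    rw [m1, Measure.smul_apply, Measure.restrict_apply hS, smul_eq_mul]
  have hiff2 : KInvariantMeasure m1 (fun x => q (-x)) ↔
      (∀ S : Set ℝ, MeasurableSet S →
        ∫⁻ x in Ioo (-1 : ℝ) 1, q (-x) S = volume (S ∩ Ioo (-1 : ℝ) 1)) := by
    constructor
    · intro h S hS
      have h1 := h S hS
      rw [m1_apply S hS, m1, lintegral_smul_measure, smul_eq_mul] at h1
      exact (ENNReal.mul_right_inj (by norm_num) (by norm_num)).mp h1
    · intro h S hS
      show ∫⁻ x, q (-x) S ∂m1 = m1 S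
      rw [m1_apply S hS, m1, lintegral_smul_measure, h S hS, smul_eq_mul]
  refine ⟨part1, ?_⟩
  constructor
  · -- forward: m1 invariance implies m2 invariance
    intro hi
    have hinv := hiff2.mp (part1.mp hi)
    intro A hA
    have hFp : MeasurableSet (Fplus A) :=
      (by fun_prop : Measurable fun p : ℝ × ℝ => (p.1, p.2, (1 : ℝ))) hA
    have hFm : MeasurableSet (Fminus A) :=
      (by fun_prop : Measurable fun p : ℝ × ℝ => (p.1, p.2, (-1 : ℝ))) hA
    have hcong : ∫⁻ w, Qfun γ q w A ∂(m2 γ) = ∫⁻ w, (fun w : ℝ × ℝ × ℝ => if w.2.2 = -1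
        then q (-ellInv γ w.2.1 w.1) {x | (ellMap γ w.2.1 x, w.2.1, (1 : ℝ)) ∈ A}
        else q (-ellInv γ w.1 w.2.1) {x | (w.1, ellMap γ w.1 x, (-1 : ℝ)) ∈ A}) w ∂(m2 γ) :=
      lintegral_congr fun w => Qfun_apply γ q hA w
    have hmeasG : Measurable (fun w : ℝ × ℝ × ℝ => if w.2.2 = -1
        then q (-ellInv γ w.2.1 w.1) {x | (ellMap γ w.2.1 x, w.2.1, (1 : ℝ)) ∈ A}
        else q (-ellInv γ w.1 w.2.1) {x | (w.1, ellMap γ w.1 x, (-1 : ℝ)) ∈ A}) := by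
      rw [← funext (Qfun_apply γ q hA)]
      exact Qfun_meas γ q hA
    rw [hcong, lint_m2 γ _ hmeasG]
    -- slice at s = 1
    have hslice1 : ∫⁻ p in Eset γ, (fun w : ℝ × ℝ × ℝ => if w.2.2 = -1
        then q (-ellInv γ w.2.1 w.1) {x | (ellMap γ w.2.1 x, w.2.1, (1 : ℝ)) ∈ A}
        else q (-ellInv γ w.1 w.2.1) {x | (w.1, ellMap γ w.1 x, (-1 : ℝ)) ∈ A})
          (p.1, p.2, 1) = volume (Fminus A ∩ Eset γ) := by
      have h1 : ∀ p : ℝ × ℝ, (fun w : ℝ × ℝ × ℝ => if w.2.2 = -1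
          then q (-ellInv γ w.2.1 w.1) {x | (ellMap γ w.2.1 x, w.2.1, (1 : ℝ)) ∈ A}
          else q (-ellInv γ w.1 w.2.1) {x | (w.1, ellMap γ w.1 x, (-1 : ℝ)) ∈ A}) (p.1, p.2, 1)
          = q (-ellInv γ p.1 p.2) {x | (p.1, ellMap γ p.1 x) ∈ Fminus A} := by
        intro p
        show (if (1 : ℝ) = -1
            then q (-ellInv γ p.2 p.1) {x | (ellMap γ p.2 x, p.2, (1 : ℝ)) ∈ A}
            else q (-ellInv γ p.1 p.2) {x | (p.1, ellMap γ p.1 x, (-1 : ℝ)) ∈ A})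
          = q (-ellInv γ p.1 p.2) {x | (p.1, ellMap γ p.1 x) ∈ Fminus A}
        rw [if_neg (by norm_num : ¬(1 : ℝ) = -1)]
        rfl
      rw [lintegral_congr fun p => h1 p]
      exact keyU γ q hinv (Fminus A) hFm
    -- slice at s = -1
    have hslice2 : ∫⁻ p in Eset γ, (fun w : ℝ × ℝ × ℝ => if w.2.2 = -1
        then q (-ellInv γ w.2.1 w.1) {x | (ellMap γ w.2.1 x, w.2.1, (1 : ℝ)) ∈ A}
        else q (-ellInv γ w.1 w.2.1) {x | (w.1, ellMap γ w.1 x, (-1 : ℝ)) ∈ A})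
          (p.1, p.2, -1) = volume (Fplus A ∩ Eset γ) := by
      have h1 : ∀ p : ℝ × ℝ, (fun w : ℝ × ℝ × ℝ => if w.2.2 = -1
          then q (-ellInv γ w.2.1 w.1) {x | (ellMap γ w.2.1 x, w.2.1, (1 : ℝ)) ∈ A}
          else q (-ellInv γ w.1 w.2.1) {x | (w.1, ellMap γ w.1 x, (-1 : ℝ)) ∈ A}) (p.1, p.2, -1)
          = q (-ellInv γ p.2 p.1) {x | (ellMap γ p.2 x, p.2) ∈ Fplus A} := by
        intro p
        show (if (-1 : ℝ) = -1
            then q (-ellInv γ p.2 p.1) {x | (ellMap γ p.2 x, p.2, (1 : ℝ)) ∈ A}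
            else q (-ellInv γ p.1 p.2) {x | (p.1, ellMap γ p.1 x, (-1 : ℝ)) ∈ A})
          = q (-ellInv γ p.2 p.1) {x | (ellMap γ p.2 x, p.2) ∈ Fplus A}
        rw [if_pos rfl]
        rfl
      rw [lintegral_congr fun p => h1 p]
      exact keyV γ q hinv (Fplus A) hFp
    rw [hslice1, hslice2]
    -- compute m2 A
    have hm2A : m2 γ A = (volume (Eset γ))⁻¹ * (2⁻¹ *
        (volume (Fplus A ∩ Eset γ) + volume (Fminus A ∩ Eset γ))) := by
      rw [← lintegral_indicator_one hA, lint_m2 γ _ (measurable_one.indicator hA)]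
      have e1 : ∫⁻ p in Eset γ, A.indicator 1 (p.1, p.2, 1) = volume (Fplus A ∩ Eset γ) := by
        have h1 : ∀ p : ℝ × ℝ, A.indicator (1 : ℝ × ℝ × ℝ → ℝ≥0∞) (p.1, p.2, 1)
            = (Fplus A).indicator 1 p := by
          intro p
          by_cases hp : (p.1, p.2, (1 : ℝ)) ∈ A
          · rw [Set.indicator_of_mem hp, Set.indicator_of_mem (by exact hp)]; rfl
          · rw [Set.indicator_of_notMem hp, Set.indicator_of_notMem (by exact hp)]
        rw [lintegral_congr fun p => h1 p, lintegral_indicator_one hFp,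
          Measure.restrict_apply hFp]
      have e2 : ∫⁻ p in Eset γ, A.indicator 1 (p.1, p.2, -1) = volume (Fminus A ∩ Eset γ) := by
        have h1 : ∀ p : ℝ × ℝ, A.indicator (1 : ℝ × ℝ × ℝ → ℝ≥0∞) (p.1, p.2, -1)
            = (Fminus A).indicator 1 p := by
          intro p
          by_cases hp : (p.1, p.2, (-1 : ℝ)) ∈ A
          · rw [Set.indicator_of_mem hp, Set.indicator_of_mem (by exact hp)]; rfl
          · rw [Set.indicator_of_notMem hp, Set.indicator_of_notMem (by exact hp)]
        rw [lintegral_congr fun p => h1 p, lintegral_indicator_one hFm,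
          Measure.restrict_apply hFm]
      rw [e1, e2]
    rw [hm2A, add_comm]
  · -- backward: m2 invariance implies m1 invariance
    intro hm2
    refine part1.mpr (hiff2.mpr ?_)
    intro S hS
    set A : Set (ℝ × ℝ × ℝ) := {w | w.2.2 = (1 : ℝ) ∧ ellInv γ w.2.1 w.1 ∈ S} with hAdef
    have hA : MeasurableSet A := by
      refine MeasurableSet.inter ?_ ?_
      · exact (measurable_snd.comp measurable_snd) (measurableSet_singleton (1 : ℝ))
      · exact (by unfold ellInv; fun_prop :
          Measurable fun w : ℝ × ℝ × ℝ => ellInv γ w.2.1 w.1) hS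
    have h0 := hm2 A hA
    -- LHS of h0
    have hcong : ∫⁻ w, Qfun γ q w A ∂(m2 γ) = ∫⁻ w, (fun w : ℝ × ℝ × ℝ => if w.2.2 = -1
        then q (-ellInv γ w.2.1 w.1) {x | (ellMap γ w.2.1 x, w.2.1, (1 : ℝ)) ∈ A}
        else q (-ellInv γ w.1 w.2.1) {x | (w.1, ellMap γ w.1 x, (-1 : ℝ)) ∈ A}) w ∂(m2 γ) :=
      lintegral_congr fun w => Qfun_apply γ q hA w
    have hmeasG : Measurable (fun w : ℝ × ℝ × ℝ => if w.2.2 = -1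
        then q (-ellInv γ w.2.1 w.1) {x | (ellMap γ w.2.1 x, w.2.1, (1 : ℝ)) ∈ A}
        else q (-ellInv γ w.1 w.2.1) {x | (w.1, ellMap γ w.1 x, (-1 : ℝ)) ∈ A}) := by
      rw [← funext (Qfun_apply γ q hA)]
      exact Qfun_meas γ q hA
    rw [hcong, lint_m2 γ _ hmeasG] at h0
    -- slice at s = 1 vanishes
    have hslice1 : ∫⁻ p in Eset γ, (fun w : ℝ × ℝ × ℝ => if w.2.2 = -1
        then q (-ellInv γ w.2.1 w.1) {x | (ellMap γ w.2.1 x, w.2.1, (1 : ℝ)) ∈ A}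
        else q (-ellInv γ w.1 w.2.1) {x | (w.1, ellMap γ w.1 x, (-1 : ℝ)) ∈ A})
          (p.1, p.2, 1) = 0 := by
      have h1 : ∀ p : ℝ × ℝ, (fun w : ℝ × ℝ × ℝ => if w.2.2 = -1
          then q (-ellInv γ w.2.1 w.1) {x | (ellMap γ w.2.1 x, w.2.1, (1 : ℝ)) ∈ A}
          else q (-ellInv γ w.1 w.2.1) {x | (w.1, ellMap γ w.1 x, (-1 : ℝ)) ∈ A}) (p.1, p.2, 1)
          = 0 := by
        intro p
        show (if (1 : ℝ) = -1
            then q (-ellInv γ p.2 p.1) {x | (ellMap γ p.2 x, p.2, (1 : ℝ)) ∈ A}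
            else q (-ellInv γ p.1 p.2) {x | (p.1, ellMap γ p.1 x, (-1 : ℝ)) ∈ A}) = 0
        rw [if_neg (by norm_num : ¬(1 : ℝ) = -1)]
        have he : {x | (p.1, ellMap γ p.1 x, (-1 : ℝ)) ∈ A} = (∅ : Set ℝ) := by
          ext x
          simp only [hAdef, Set.mem_setOf_eq, Set.mem_empty_iff_false, iff_false]
          intro hc
          exact absurd hc.1 (by norm_num)
        rw [he]
        exact measure_empty
      rw [lintegral_congr fun p => h1 p]
      exact lintegral_zero
    -- slice at s = -1
    set I : ℝ≥0∞ := ∫⁻ x in Ioo (-1 : ℝ) 1, q (-x) S with hIdef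
    set R : ℝ≥0∞ := ∫⁻ v : ℝ, ENNReal.ofReal (Real.sqrt (1 - v ^ 2 * Real.sin γ ^ 2)) with hRdef
    have hslice2 : ∫⁻ p in Eset γ, (fun w : ℝ × ℝ × ℝ => if w.2.2 = -1
        then q (-ellInv γ w.2.1 w.1) {x | (ellMap γ w.2.1 x, w.2.1, (1 : ℝ)) ∈ A}
        else q (-ellInv γ w.1 w.2.1) {x | (w.1, ellMap γ w.1 x, (-1 : ℝ)) ∈ A})
          (p.1, p.2, -1) = R * I := by
      have hf : Measurable fun p : ℝ × ℝ =>
          q (-ellInv γ p.2 p.1) {x | (ellMap γ p.2 x, p.2, (1 : ℝ)) ∈ A} :=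
        meas_kernel_section q (fun p : ℝ × ℝ => -ellInv γ p.2 p.1)
          (by unfold ellInv; fun_prop)
          (t := {px : (ℝ × ℝ) × ℝ | (ellMap γ px.1.2 px.2, px.1.2, (1 : ℝ)) ∈ A})
          ((by unfold ellMap; fun_prop :
            Measurable fun px : (ℝ × ℝ) × ℝ =>
              (ellMap γ px.1.2 px.2, px.1.2, (1 : ℝ))) hA)
      have h1 : ∀ p : ℝ × ℝ, (fun w : ℝ × ℝ × ℝ => if w.2.2 = -1
          then q (-ellInv γ w.2.1 w.1) {x | (ellMap γ w.2.1 x, w.2.1, (1 : ℝ)) ∈ A}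
          else q (-ellInv γ w.1 w.2.1) {x | (w.1, ellMap γ w.1 x, (-1 : ℝ)) ∈ A}) (p.1, p.2, -1)
          = q (-ellInv γ p.2 p.1) {x | (ellMap γ p.2 x, p.2, (1 : ℝ)) ∈ A} := by
        intro p
        show (if (-1 : ℝ) = -1
            then q (-ellInv γ p.2 p.1) {x | (ellMap γ p.2 x, p.2, (1 : ℝ)) ∈ A}
            else q (-ellInv γ p.1 p.2) {x | (p.1, ellMap γ p.1 x, (-1 : ℝ)) ∈ A})
          = q (-ellInv γ p.2 p.1) {x | (ellMap γ p.2 x, p.2, (1 : ℝ)) ∈ A}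
        rw [if_pos rfl]
      rw [lintegral_congr fun p => h1 p, fub2 γ _ hf]
      have h2 : ∀ v : ℝ, ENNReal.ofReal (Real.sqrt (1 - v ^ 2 * Real.sin γ ^ 2)) *
          (∫⁻ x in Ioo (-1 : ℝ) 1,
            q (-ellInv γ v (ellMap γ v x)) {x' | (ellMap γ v x', v, (1 : ℝ)) ∈ A})
          = ENNReal.ofReal (Real.sqrt (1 - v ^ 2 * Real.sin γ ^ 2)) * I := by
        intro v
        by_cases h : v ^ 2 * Real.sin γ ^ 2 < 1
        · congr 1
          refine lintegral_congr fun x => ?_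
          rw [ellInv_ellMap h x]
          congr 1
          ext x'
          simp only [hAdef, Set.mem_setOf_eq, true_and, ellInv_ellMap h x']
        · rw [sqrt_zero_of h, ENNReal.ofReal_zero, zero_mul, zero_mul]
      rw [lintegral_congr fun v => h2 v]
      exact lintegral_mul_const _ (measurable_ofReal_sqrt γ)
    -- compute m2 A
    have hFp : MeasurableSet (Fplus A) :=
      (by fun_prop : Measurable fun p : ℝ × ℝ => (p.1, p.2, (1 : ℝ))) hA
    have hFm : MeasurableSet (Fminus A) :=
      (by fun_prop : Measurable fun p : ℝ × ℝ => (p.1, p.2, (-1 : ℝ))) hA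
    have hFme : Fminus A = (∅ : Set (ℝ × ℝ)) := by
      ext p
      simp only [Fminus, hAdef, Set.mem_setOf_eq, Set.mem_empty_iff_false, iff_false]
      intro hc
      exact absurd hc.1 (by norm_num)
    have hFpeq : volume (Fplus A ∩ Eset γ) = R * volume (S ∩ Ioo (-1 : ℝ) 1) := by
      rw [← Measure.restrict_apply hFp, ← lintegral_indicator_one hFp,
        fub2 γ _ (measurable_one.indicator hFp)]
      have h2 : ∀ v : ℝ, ENNReal.ofReal (Real.sqrt (1 - v ^ 2 * Real.sin γ ^ 2)) *
          (∫⁻ x in Ioo (-1 : ℝ) 1, (Fplus A).indicator 1 (ellMap γ v x, v))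
          = ENNReal.ofReal (Real.sqrt (1 - v ^ 2 * Real.sin γ ^ 2)) *
            volume (S ∩ Ioo (-1 : ℝ) 1) := by
        intro v
        by_cases h : v ^ 2 * Real.sin γ ^ 2 < 1
        · congr 1
          have h3 : ∀ x : ℝ, (Fplus A).indicator (1 : ℝ × ℝ → ℝ≥0∞) (ellMap γ v x, v)
              = S.indicator 1 x := by
            intro x
            have hmem : (ellMap γ v x, v) ∈ Fplus A ↔ x ∈ S := by
              simp only [Fplus, hAdef, Set.mem_setOf_eq, true_and, ellInv_ellMap h x]
            by_cases hx : x ∈ S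
            · rw [Set.indicator_of_mem (hmem.mpr hx), Set.indicator_of_mem hx]; rfl
            · rw [Set.indicator_of_notMem (fun hc => hx (hmem.mp hc)),
                Set.indicator_of_notMem hx]
          rw [lintegral_congr fun x => h3 x, lintegral_indicator_one hS,
            Measure.restrict_apply hS]
        · rw [sqrt_zero_of h, ENNReal.ofReal_zero, zero_mul, zero_mul]
      rw [lintegral_congr fun v => h2 v]
      exact lintegral_mul_const _ (measurable_ofReal_sqrt γ)
    have hm2A : m2 γ A = (volume (Eset γ))⁻¹ * (2⁻¹ *
        (R * volume (S ∩ Ioo (-1 : ℝ) 1) + 0)) := by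
      rw [← lintegral_indicator_one hA, lint_m2 γ _ (measurable_one.indicator hA)]
      have e1 : ∫⁻ p in Eset γ, A.indicator 1 (p.1, p.2, 1) = R * volume (S ∩ Ioo (-1 : ℝ) 1) := by
        have h1 : ∀ p : ℝ × ℝ, A.indicator (1 : ℝ × ℝ × ℝ → ℝ≥0∞) (p.1, p.2, 1)
            = (Fplus A).indicator 1 p := by
          intro p
          by_cases hp : (p.1, p.2, (1 : ℝ)) ∈ A
          · rw [Set.indicator_of_mem hp, Set.indicator_of_mem (by exact hp)]; rfl
          · rw [Set.indicator_of_notMem hp, Set.indicator_of_notMem (by exact hp)]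
        rw [lintegral_congr fun p => h1 p, lintegral_indicator_one hFp,
          Measure.restrict_apply hFp, hFpeq]
      have e2 : ∫⁻ p in Eset γ, A.indicator 1 (p.1, p.2, -1) = 0 := by
        have h1 : ∀ p : ℝ × ℝ, A.indicator (1 : ℝ × ℝ × ℝ → ℝ≥0∞) (p.1, p.2, -1)
            = (Fminus A).indicator 1 p := by
          intro p
          by_cases hp : (p.1, p.2, (-1 : ℝ)) ∈ A
          · rw [Set.indicator_of_mem hp, Set.indicator_of_mem (by exact hp)]; rfl
          · rw [Set.indicator_of_notMem hp, Set.indicator_of_notMem (by exact hp)]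
        rw [lintegral_congr fun p => h1 p, lintegral_indicator_one hFm,
          Measure.restrict_apply hFm, hFme]
        simp
      rw [e1, e2]
    rw [hslice1, hslice2, hm2A] at h0
    -- cancel constants
    have hc0 : (volume (Eset γ))⁻¹ ≠ 0 := ENNReal.inv_ne_zero.mpr (volE_ne_top hs)
    have hctop : (volume (Eset γ))⁻¹ ≠ ⊤ := ENNReal.inv_ne_top.mpr (volE_ne_zero hs)
    have h1 := (ENNReal.mul_right_inj hc0 hctop).mp h0
    have h2 := (ENNReal.mul_right_inj (by norm_num : (2 : ℝ≥0∞)⁻¹ ≠ 0)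
      (by norm_num : (2 : ℝ≥0∞)⁻¹ ≠ ⊤)).mp h1
    rw [zero_add, add_zero] at h2
    exact (ENNReal.mul_right_inj (R_ne_zero hs) (R_ne_top hs)).mp h2
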